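/- Let g : [0,∞) → ℝ ∪ {−∞} be defined by g(t₀) = c + (1/2)∫₀^∞ [(n+m)/(1+t) − h(t+t₀)] dt where h : [0,∞) → [0,∞] is decreasing, right continuous, and satisfies (n+m)²/(C²+(n+m)t) ≤ h(t) ≤ (n+m)/t for all t > 0 (with C > 0 a constant and c = ((n+m)/2)log(2πe)). Then: (1) g(t₀+ε) − g(t₀) = (1/2)∫_{t₀}^{t₀+ε} h(t) dt for all ε > 0 whenever g(t₀) ≠ −∞; (2) g is increasing, concave, and continuous; (3) the right derivative of g at t exists and equals h(t)/2; (4) g(t₀) ≥ ((n+m)/2)·log(2πe·t₀). -/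

import Mathlib

open MeasureTheory Filter Real Set Topology


lemma st10.measmax {h : ℝ → ℝ} (hmono : AntitoneOn h (Ici 0)) :
    Measurable fun t => h (max t 0) := by
  have : Antitone fun t => h (max t 0) := fun a b hab =>
    hmono (le_max_right a 0) (le_max_right b 0) (max_le_max hab le_rfl)
  exact this.measurable

lemma st10.h_ii {h : ℝ → ℝ} (hmono : AntitoneOn h (Ici 0))
    (hnn : ∀ t ∈ Ici (0:ℝ), 0 ≤ h t) {a b : ℝ} (ha : 0 ≤ a) (hab : a ≤ b) :
    IntervalIntegrable h volume a b := by
  rw [intervalIntegrable_iff_integrableOn_Ioc_of_le hab]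
  have key : (fun t => h (max t 0)) =ᵐ[volume.restrict (Ioc a b)] h := by
    filter_upwards [ae_restrict_mem measurableSet_Ioc] with t ht
    rw [max_eq_left (ha.trans ht.1.le)]
  refine Integrable.mono' (g := fun _ => h 0) (integrableOn_const measure_Ioc_lt_top.ne)
    (((st10.measmax hmono).aestronglyMeasurable.restrict).congr key) ?_
  · filter_upwards [ae_restrict_mem measurableSet_Ioc] with t ht
    have h0t : (0:ℝ) ≤ t := ha.trans ht.1.le
    rw [Real.norm_eq_abs, abs_of_nonneg (hnn t h0t)]
    exact hmono self_mem_Ici h0t h0t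


lemma st10.w_aesm {h : ℝ → ℝ} (hmono : AntitoneOn h (Ici 0)) {N t₀ : ℝ} (ht₀ : 0 ≤ t₀)
    {s : Set ℝ} (hs : MeasurableSet s) (hsub : s ⊆ Ioi 0) :
    AEStronglyMeasurable (fun t => N/(1+t) - h (t + t₀)) (volume.restrict s) := by
  have m1 : Measurable fun t : ℝ => N/(1+t) - h (max (t + t₀) 0) :=
    (measurable_const.div (measurable_const.add measurable_id)).sub
      ((st10.measmax hmono).comp (measurable_id.add_const t₀))
  have key : (fun t : ℝ => N/(1+t) - h (max (t + t₀) 0)) =ᵐ[volume.restrict s]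
      fun t => N/(1+t) - h (t + t₀) := by
    filter_upwards [ae_restrict_mem hs] with t ht
    have : (0:ℝ) < t + t₀ := add_pos_of_pos_of_nonneg (hsub ht) ht₀
    rw [max_eq_left this.le]
  exact (m1.aestronglyMeasurable.restrict).congr key

lemma st10.w_int {h : ℝ → ℝ} {N C : ℝ} (hC : 0 < C) (hN : 0 ≤ N)
    (hmono : AntitoneOn h (Ici 0)) (hnn : ∀ t ∈ Ici (0:ℝ), 0 ≤ h t)
    (hlow : ∀ t > (0:ℝ), N^2 / (C^2 + N * t) ≤ h t)
    (hup : ∀ t > (0:ℝ), h t ≤ N / t)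
    {t₀ : ℝ} (ht₀ : 0 ≤ t₀) :
    IntegrableOn (fun t => N/(1+t) - h (t + t₀)) (Ioi 0) := by
  rw [← Ioc_union_Ioi_eq_Ioi (zero_le_one (α := ℝ))]
  refine IntegrableOn.union ?_ ?_
  · refine Integrable.mono' (g := fun _ => N + h 0)
      (integrableOn_const measure_Ioc_lt_top.ne)
      (st10.w_aesm hmono ht₀ measurableSet_Ioc Ioc_subset_Ioi_self) ?_
    filter_upwards [ae_restrict_mem measurableSet_Ioc] with t ht
    have h1 : 0 < t := ht.1
    have h2 : 0 < t + t₀ := by linarith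
    have h3 : 0 ≤ h (t+t₀) := hnn _ h2.le
    have h4 : h (t + t₀) ≤ h 0 := hmono self_mem_Ici h2.le h2.le
    have h5 : 0 ≤ N / (1+t) := by positivity
    have h6 : N / (1+t) ≤ N := by
      rw [div_le_iff₀ (by linarith)]; nlinarith
    rw [Real.norm_eq_abs, abs_le]
    constructor <;> linarith
  · obtain ⟨M, hM⟩ : ∃ M : ℝ, M = C^2 + N*t₀ + N + N*(1+t₀) := ⟨_, rfl⟩
    have hMnn : 0 ≤ M := by
      rw [hM]
      nlinarith [sq_nonneg C, mul_nonneg hN ht₀,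
        mul_nonneg hN (show (0:ℝ) ≤ 1 + t₀ by linarith)]
    refine Integrable.mono' (g := fun t => M * t^(-2:ℝ))
      (((integrableOn_Ioi_rpow_of_lt (by norm_num) one_pos)).const_mul M)
      (st10.w_aesm hmono ht₀ measurableSet_Ioi (Ioi_subset_Ioi zero_le_one)) ?_
    filter_upwards [ae_restrict_mem measurableSet_Ioi] with t ht
    have h1 : (1:ℝ) < t := ht
    have h0 : (0:ℝ) < t := by linarith
    have h2 : 0 < t + t₀ := by linarith
    have hrw : t ^ (-2:ℝ) = 1 / t^2 := by
      rw [Real.rpow_neg h0.le, one_div, ← Real.rpow_natCast t 2]; norm_num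
    have hD : 0 < C^2 + N*(t+t₀) := by nlinarith [sq_nonneg C, mul_nonneg hN h2.le]
    have hu := hup (t+t₀) h2
    have hl := hlow (t+t₀) h2
    rw [Real.norm_eq_abs, abs_le, hrw]
    constructor
    · -- lower: -(M*(1/t^2)) ≤ N/(1+t) - h(t+t₀), using h(t+t₀) ≤ N/(t+t₀)
      have e1 : N/(t+t₀) - N/(1+t) = (N*(1-t₀))/((t+t₀)*(1+t)) := by
        field_simp; ring
      have e2 : (N*(1-t₀))/((t+t₀)*(1+t)) ≤ M * (1/t^2) := by
        rw [mul_one_div, div_le_div_iff₀ (by positivity) (by positivity)]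
        have hPt : 0 ≤ (t+t₀)*(1+t) - t^2 := by nlinarith [mul_nonneg ht₀ h0.le]
        have hMn : 0 ≤ M - N*(1-t₀) := by rw [hM]; nlinarith [mul_nonneg hN ht₀]
        nlinarith [mul_nonneg hMnn hPt, mul_nonneg hMn (sq_nonneg t)]
      linarith
    · -- upper: N/(1+t) - h(t+t₀) ≤ M*(1/t^2), using N^2/(C^2+N(t+t₀)) ≤ h(t+t₀)
      have e1 : N/(1+t) - N^2/(C^2+N*(t+t₀)) = (N*(C^2+N*t₀-N))/((1+t)*(C^2+N*(t+t₀))) := by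
        field_simp; ring
      have e2 : (N*(C^2+N*t₀-N))/((1+t)*(C^2+N*(t+t₀))) ≤ M * (1/t^2) := by
        rw [mul_one_div, div_le_div_iff₀ (by positivity) (by positivity)]
        have hA : N*t ≤ C^2 + N*(t+t₀) := by nlinarith [sq_nonneg C, mul_nonneg hN ht₀]
        have hK : 0 ≤ C^2+N*t₀+N := by nlinarith [sq_nonneg C, mul_nonneg hN ht₀]
        have hPN : 0 ≤ (1+t)*(C^2+N*(t+t₀)) - N*t^2 := by
          nlinarith [mul_le_mul_of_nonneg_left hA (show (0:ℝ) ≤ 1+t by linarith),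
            mul_nonneg hN h0.le]
        have hMK : 0 ≤ M - (C^2+N*t₀+N) := by rw [hM]; nlinarith [mul_nonneg hN ht₀]
        have hnK : N*(C^2+N*t₀-N) ≤ N*(C^2+N*t₀+N) := by nlinarith [mul_nonneg hN hN]
        have hPpos : (0:ℝ) ≤ (1+t)*(C^2+N*(t+t₀)) := by positivity
        have s1 : N*(C^2+N*t₀-N)*t^2 ≤ N*(C^2+N*t₀+N)*t^2 :=
          mul_le_mul_of_nonneg_right hnK (sq_nonneg t)
        have s2 : (C^2+N*t₀+N)*(N*t^2) ≤ (C^2+N*t₀+N)*((1+t)*(C^2+N*(t+t₀))) :=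
          mul_le_mul_of_nonneg_left (by linarith) hK
        have s3 : (C^2+N*t₀+N)*((1+t)*(C^2+N*(t+t₀))) ≤ M*((1+t)*(C^2+N*(t+t₀))) :=
          mul_le_mul_of_nonneg_right (by linarith) hPpos
        linarith [s1, s2, s3]
      linarith


lemma st10.key {h : ℝ → ℝ} {N C : ℝ} (hC : 0 < C) (hN : 0 ≤ N)
    (hmono : AntitoneOn h (Ici 0)) (hnn : ∀ t ∈ Ici (0:ℝ), 0 ≤ h t)
    (hlow : ∀ t > (0:ℝ), N^2 / (C^2 + N * t) ≤ h t)
    (hup : ∀ t > (0:ℝ), h t ≤ N / t)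
    {t₀ ε : ℝ} (ht₀ : 0 ≤ t₀) (hε : 0 < ε) :
    ∫ t in Ioi (0:ℝ), (h (t + t₀) - h (t + t₀ + ε)) = ∫ t in t₀..(t₀+ε), h t := by
  have hint : IntegrableOn (fun t => h (t + t₀) - h (t + t₀ + ε)) (Ioi 0) := by
    have h2 := (st10.w_int hC hN hmono hnn hlow hup (show (0:ℝ) ≤ t₀ + ε by linarith)).sub
      (st10.w_int hC hN hmono hnn hlow hup ht₀)
    have eq : (fun t => (N/(1+t) - h (t + (t₀+ε))) - (N/(1+t) - h (t + t₀)))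
        = fun t => h (t + t₀) - h (t + t₀ + ε) := by
      funext t; rw [← add_assoc]; ring
    rwa [← eq]
  have T1 := intervalIntegral_tendsto_integral_Ioi 0 hint tendsto_id
  simp only [id_eq] at T1
  set I : ℝ := ∫ t in t₀..(t₀+ε), h t with hI
  have hev : ∀ᶠ R in atTop, (∫ t in (0:ℝ)..R, (h (t + t₀) - h (t + t₀ + ε)))
      = I - ∫ t in (t₀+R)..(t₀+R+ε), h t := by
    filter_upwards [eventually_ge_atTop ε] with R hR
    have hR0 : (0:ℝ) ≤ R := hε.le.trans hR
    have i1 : IntervalIntegrable (fun t => h (t + t₀)) volume 0 R := by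
      have := (st10.h_ii hmono hnn ht₀ (by linarith : t₀ ≤ t₀ + R)).comp_add_right t₀
      simpa using this
    have i2 : IntervalIntegrable (fun t => h (t + t₀ + ε)) volume 0 R := by
      have := (st10.h_ii hmono hnn (show (0:ℝ) ≤ t₀ + ε by linarith)
        (by linarith : t₀ + ε ≤ t₀ + ε + R)).comp_add_right (t₀ + ε)
      have e2 : (fun t => h (t + (t₀ + ε))) = fun t => h (t + t₀ + ε) := by
        funext t; rw [← add_assoc]
      simpa [e2] using this
    have A : (∫ t in (0:ℝ)..R, h (t + t₀)) = ∫ t in t₀..(t₀+R), h t := by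
      rw [intervalIntegral.integral_comp_add_right]
      norm_num [add_comm]
    have B : (∫ t in (0:ℝ)..R, h (t + t₀ + ε)) = ∫ t in (t₀+ε)..(t₀+R+ε), h t := by
      have e2 : (fun t => h (t + t₀ + ε)) = fun t => h (t + (t₀ + ε)) := by
        funext t; rw [← add_assoc]
      rw [e2, intervalIntegral.integral_comp_add_right,
        show (0:ℝ) + (t₀ + ε) = t₀ + ε by ring, show R + (t₀ + ε) = t₀ + R + ε by ring]
    have C1 : (∫ t in t₀..(t₀+ε), h t) + (∫ t in (t₀+ε)..(t₀+R), h t)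
        = ∫ t in t₀..(t₀+R), h t :=
      intervalIntegral.integral_add_adjacent_intervals
        (st10.h_ii hmono hnn ht₀ (by linarith))
        (st10.h_ii hmono hnn (by linarith) (by linarith))
    have C2 : (∫ t in (t₀+ε)..(t₀+R), h t) + (∫ t in (t₀+R)..(t₀+R+ε), h t)
        = ∫ t in (t₀+ε)..(t₀+R+ε), h t :=
      intervalIntegral.integral_add_adjacent_intervals
        (st10.h_ii hmono hnn (show (0:ℝ) ≤ t₀+ε by linarith) (show t₀+ε ≤ t₀+R by linarith))
        (st10.h_ii hmono hnn (show (0:ℝ) ≤ t₀+R by linarith) (show t₀+R ≤ t₀+R+ε by linarith))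
    rw [intervalIntegral.integral_sub i1 i2, A, B]
    linarith
  have tail0 : Tendsto (fun R => ∫ t in (t₀+R)..(t₀+R+ε), h t) atTop (𝓝 0) := by
    apply squeeze_zero' (g := fun R => (ε * N) / (t₀ + R))
    · filter_upwards [eventually_ge_atTop (0:ℝ)] with R hR
      exact intervalIntegral.integral_nonneg (by linarith)
        (fun u hu => hnn u (by simp only [mem_Ici]; linarith [hu.1]))
    · filter_upwards [eventually_gt_atTop (0:ℝ)] with R hR
      have hpos : (0:ℝ) < t₀ + R := by linarith
      have hb : ∀ x ∈ Icc (t₀+R) (t₀+R+ε), h x ≤ N / (t₀ + R) := by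
        intro x hx
        exact le_trans (hmono hpos.le (by simp only [mem_Ici]; linarith [hx.1]) hx.1)
          (hup _ hpos)
      have := intervalIntegral.integral_mono_on (by linarith : t₀+R ≤ t₀+R+ε)
        (st10.h_ii hmono hnn hpos.le (by linarith)) intervalIntegrable_const hb
      simpa [smul_eq_mul, mul_comm, mul_div_assoc] using this
    · have : Tendsto (fun R : ℝ => t₀ + R) atTop atTop :=
        tendsto_atTop_add_const_left atTop t₀ tendsto_id
      exact tendsto_const_nhds.div_atTop this
  have T2 : Tendsto (fun R => (∫ t in (0:ℝ)..R, (h (t + t₀) - h (t + t₀ + ε))))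
      atTop (𝓝 I) := by
    have := (tendsto_const_nhds (x := I) (f := atTop (α := ℝ))).sub tail0
    rw [sub_zero] at this
    exact this.congr' (by filter_upwards [hev] with R hR; rw [hR])
  exact tendsto_nhds_unique T1 T2


lemma st10.logint {N : ℝ} (hN : 0 ≤ N) {t₀ : ℝ} (ht : 0 < t₀) :
    IntegrableOn (fun t => N/(1+t) - N/(t+t₀)) (Ioi 0) ∧
      ∫ t in Ioi (0:ℝ), (N/(1+t) - N/(t+t₀)) = N * Real.log t₀ := by
  have hderiv : ∀ x ∈ Ici (0:ℝ), HasDerivAt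
      (fun t => N * Real.log (1+t) - N * Real.log (t₀+t)) (N/(1+x) - N/(x+t₀)) x := by
    intro x hx
    have hx0 : (0:ℝ) ≤ x := hx
    have h1 : (0:ℝ) < 1 + x := by linarith
    have h2 : (0:ℝ) < t₀ + x := by linarith
    have d1 : HasDerivAt (fun t : ℝ => 1 + t) 1 x := by
      simpa using (hasDerivAt_id x).const_add 1
    have d2 : HasDerivAt (fun t : ℝ => t₀ + t) 1 x := by
      simpa using (hasDerivAt_id x).const_add t₀
    have l1 := (d1.log h1.ne').const_mul N
    have l2 := (d2.log h2.ne').const_mul N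
    have := l1.sub l2
    rw [show N/(1+x) - N/(x+t₀) = N * (1/(1+x)) - N*(1/(t₀+x)) by rw [add_comm x t₀]; ring]
    exact this
  have htendF : Tendsto (fun t => N * Real.log (1+t) - N * Real.log (t₀+t)) atTop (𝓝 0) := by
    have hq : Tendsto (fun t : ℝ => (1+t)/(t₀+t)) atTop (𝓝 1) := by
      have num : Tendsto (fun t : ℝ => 1/t + 1) atTop (𝓝 (0 + 1)) := by
        exact (tendsto_inv_atTop_zero.congr (fun t => (one_div t).symm)).add tendsto_const_nhds
      have den : Tendsto (fun t : ℝ => t₀/t + 1) atTop (𝓝 (0 + 1)) := by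
        exact (tendsto_const_nhds.div_atTop tendsto_id).add tendsto_const_nhds
      have := num.div den (by norm_num)
      norm_num at this
      refine this.congr' ?_
      filter_upwards [eventually_gt_atTop (0:ℝ)] with t htp
      have hden : t₀/t + 1 ≠ 0 := by positivity
      rw [Pi.div_apply]
      rw [div_eq_div_iff hden (by positivity)]
      field_simp
    have hlog : Tendsto (fun t : ℝ => Real.log ((1+t)/(t₀+t))) atTop (𝓝 0) := by
      have := (Real.continuousAt_log one_ne_zero).tendsto.comp hq
      simpa [Function.comp_def] using this
    have := hlog.const_mul N
    rw [mul_zero] at this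
    refine this.congr' ?_
    filter_upwards [eventually_gt_atTop (0:ℝ)] with t htp
    rw [Real.log_div (by linarith) (by linarith), mul_sub]
  have hint : IntegrableOn (fun x => N/(1+x) - N/(x+t₀)) (Ioi 0) := by
    rcases le_total t₀ 1 with hc | hc
    · refine integrableOn_Ioi_deriv_of_nonpos' hderiv (fun x hx => ?_) htendF
      have hx0 : (0:ℝ) < x := hx
      have : N/(1+x) ≤ N/(x+t₀) := by
        apply div_le_div_of_nonneg_left hN (by linarith) (by linarith)
      linarith
    · refine integrableOn_Ioi_deriv_of_nonneg' hderiv (fun x hx => ?_) htendF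
      have hx0 : (0:ℝ) < x := hx
      have : N/(x+t₀) ≤ N/(1+x) := by
        apply div_le_div_of_nonneg_left hN (by linarith) (by linarith)
      linarith
  refine ⟨hint, ?_⟩
  have := integral_Ioi_of_hasDerivAt_of_tendsto' hderiv hint htendF
  rw [this]
  simp [Real.log_one]

lemma st10.intbound {h : ℝ → ℝ} (hmono : AntitoneOn h (Ici 0))
    (hnn : ∀ t ∈ Ici (0:ℝ), 0 ≤ h t) {a b : ℝ} (ha : 0 ≤ a) (hab : a ≤ b) :
    (b - a) * h b ≤ (∫ t in a..b, h t) ∧ (∫ t in a..b, h t) ≤ (b - a) * h a := by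
  have hii := st10.h_ii hmono hnn ha hab
  constructor
  · have := intervalIntegral.integral_mono_on (f := fun _ => h b) hab
      intervalIntegrable_const hii
      (fun x hx => hmono (ha.trans hx.1) (ha.trans hab) hx.2)
    simpa [smul_eq_mul, mul_comm] using this
  · have := intervalIntegral.integral_mono_on (g := fun _ => h a) hab hii
      intervalIntegrable_const
      (fun x hx => hmono ha (ha.trans hx.1) hx.1)
    simpa [smul_eq_mul, mul_comm] using this

/-- Properties of the entropy `g(t₀) = c + (1/2)∫₀^∞[(n+m)/(1+t) − h(t+t₀)]dt`
along the semicircular flow, where `h` (the bi-free Fisher information) is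
decreasing, right continuous, nonnegative, and satisfies the Cramer–Rao lower
bound and the Stam upper bound `(n+m)²/(C²+(n+m)t) ≤ h(t) ≤ (n+m)/t`, and where
`c = ((n+m)/2)·log(2πe)`.  The value `g(t₀)` is `−∞` exactly when the integrand
fails to be integrable.  Then:
(1) `g(t₀+ε) − g(t₀) = (1/2)∫_{t₀}^{t₀+ε} h(t)dt` whenever `g(t₀) ≠ −∞`;
(2) `g` is increasing, continuous and concave on `[0,∞)`;
(3) the right derivative of `g` at `t` exists and equals `h(t)/2`;
(4) `g(t₀) ≥ ((n+m)/2)·log(2πe·t₀)`. -/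
theorem stmt10 (n m : ℕ) (C : ℝ) (hC : 0 < C) (h : ℝ → ℝ) (g : ℝ → EReal)
    (hmono : AntitoneOn h (Ici 0))
    (hrc : ∀ t ∈ Ici (0:ℝ), ContinuousWithinAt h (Ici t) t)
    (hnn : ∀ t ∈ Ici (0:ℝ), 0 ≤ h t)
    (hlow : ∀ t > (0:ℝ), ((n+m : ℝ))^2 / (C^2 + (n+m) * t) ≤ h t)
    (hup : ∀ t > (0:ℝ), h t ≤ (n+m : ℝ) / t)
    (hg : ∀ t₀ ∈ Ici (0:ℝ),
      (IntegrableOn (fun t => (n+m : ℝ)/(1+t) - h (t + t₀)) (Ioi 0) ∧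
        g t₀ = (((n+m : ℝ)/2 * Real.log (2 * π * Real.exp 1)
          + (1/2) * ∫ t in Ioi (0:ℝ), ((n+m : ℝ)/(1+t) - h (t + t₀)) : ℝ) : EReal))
      ∨ (¬ IntegrableOn (fun t => (n+m : ℝ)/(1+t) - h (t + t₀)) (Ioi 0) ∧ g t₀ = ⊥)) :
    (∀ t₀ ∈ Ici (0:ℝ), g t₀ ≠ ⊥ → ∀ ε > (0:ℝ),
      g (t₀ + ε) = g t₀ + (((1/2) * ∫ t in t₀..(t₀+ε), h t : ℝ) : EReal)) ∧
    MonotoneOn g (Ici 0) ∧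
    ContinuousOn g (Ici 0) ∧
    (∀ a ∈ Ici (0:ℝ), ∀ b ∈ Ici (0:ℝ), ∀ s ∈ Icc (0:ℝ) 1,
      ((s : EReal) * g a + (((1 - s : ℝ)) : EReal) * g b) ≤ g (s * a + (1 - s) * b)) ∧
    (∀ t ∈ Ici (0:ℝ), g t ≠ ⊥ →
      Tendsto (fun ε : ℝ => (g (t + ε) - g t) * (((1/ε : ℝ)) : EReal))
        (nhdsWithin 0 (Ioi 0)) (nhds (((h t / 2 : ℝ)) : EReal))) ∧
    (∀ t₀ > (0:ℝ),
      ((((n+m : ℝ)/2) * Real.log (2 * π * Real.exp 1 * t₀) : ℝ) : EReal) ≤ g t₀) := by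
  have hN : (0:ℝ) ≤ (n:ℝ) + (m:ℝ) := by positivity
  obtain ⟨c, hc⟩ : ∃ c : ℝ, c = (n+m : ℝ)/2 * Real.log (2 * π * Real.exp 1) := ⟨_, rfl⟩
  obtain ⟨G, hG⟩ : ∃ G : ℝ → ℝ,
      G = fun t₀ => c + (1/2) * ∫ t in Ioi (0:ℝ), ((n+m : ℝ)/(1+t) - h (t + t₀)) := ⟨_, rfl⟩
  have hgG : ∀ t₀ ∈ Ici (0:ℝ), g t₀ = ((G t₀ : ℝ) : EReal) := by
    intro t₀ ht₀
    rcases hg t₀ ht₀ with ⟨_, hgg⟩ | ⟨hni, _⟩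
    · simp only [hG]
      rw [hc]
      exact hgg
    · exact absurd (st10.w_int hC hN hmono hnn hlow hup ht₀) hni
  -- the fundamental real identity
  have hGeq : ∀ a b : ℝ, 0 ≤ a → a ≤ b → G b = G a + (1/2) * ∫ t in a..b, h t := by
    intro a b ha hab
    rcases eq_or_lt_of_le hab with rfl | hlt
    · simp
    · have hb : (0:ℝ) ≤ b := ha.trans hab
      have hε : 0 < b - a := by linarith
      have w1 := st10.w_int hC hN hmono hnn hlow hup ha
      have wb := st10.w_int hC hN hmono hnn hlow hup hb
      have hsub := integral_sub wb w1
      have eq : (fun t => ((n+m:ℝ)/(1+t) - h (t + b)) - ((n+m:ℝ)/(1+t) - h (t + a)))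
          = fun t => h (t + a) - h (t + a + (b-a)) := by
        funext t
        have : t + a + (b-a) = t + b := by ring
        rw [this]; ring
      rw [eq] at hsub
      have key := st10.key hC hN hmono hnn hlow hup ha hε
      rw [show a + (b-a) = b by ring] at key
      simp only [hG]
      linarith [hsub, key]
  have hbound := fun {a b : ℝ} (ha : 0 ≤ a) (hab : a ≤ b) => st10.intbound hmono hnn ha hab
  refine ⟨?_, ?_, ?_, ?_, ?_, ?_⟩
  -- (1)
  · intro t₀ ht₀ _ ε hε
    rw [hgG t₀ ht₀, hgG (t₀+ε) (by simp only [mem_Ici] at ht₀ ⊢; linarith),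
      hGeq t₀ (t₀+ε) ht₀ (by linarith), EReal.coe_add]
  -- (2) monotone
  · intro a ha b hb hab
    rw [hgG a ha, hgG b hb, EReal.coe_le_coe_iff]
    have e := hGeq a b ha hab
    have hpos : 0 ≤ ∫ t in a..b, h t :=
      intervalIntegral.integral_nonneg hab (fun u hu => hnn u (le_trans ha hu.1))
    linarith
  -- (3) continuity
  · have dlip : ∀ x ∈ Ici (0:ℝ), ∀ y ∈ Ici (0:ℝ), x ≤ y →
        dist (G x) (G y) ≤ h 0 / 2 * dist x y := by
      intro x hx y hy hxy
      have e := hGeq x y hx hxy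
      have hb2 := (hbound hx hxy).2
      have hpos : 0 ≤ ∫ t in x..y, h t :=
        intervalIntegral.integral_nonneg hxy (fun u hu => hnn u (le_trans hx hu.1))
      have h0x : h x ≤ h 0 := hmono self_mem_Ici hx hx
      have hyx : (0:ℝ) ≤ y - x := by linarith
      rw [Real.dist_eq, Real.dist_eq, abs_of_nonpos (by linarith), abs_of_nonpos (by linarith)]
      nlinarith [mul_le_mul_of_nonneg_left h0x hyx]
    have lip : LipschitzOnWith (Real.toNNReal (h 0 / 2)) G (Ici 0) := by
      apply LipschitzOnWith.of_dist_le'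
      intro x hx y hy
      rcases le_total x y with hxy | hyx
      · exact dlip x hx y hy hxy
      · rw [dist_comm (G x) (G y), dist_comm x y]
        exact dlip y hy x hx hyx
    exact (continuous_coe_real_ereal.comp_continuousOn lip.continuousOn).congr
      (fun t ht => hgG t ht)
  -- (4) concavity
  · have hconc : ∀ a b s : ℝ, 0 ≤ a → a ≤ b → 0 ≤ s → s ≤ 1 →
        s * G a + (1-s) * G b ≤ G (s*a + (1-s)*b) := by
      intro a b s ha hab hs hs1
      obtain ⟨x, hxdef⟩ : ∃ x : ℝ, x = s*a + (1-s)*b := ⟨_, rfl⟩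
      rw [← hxdef]
      have hax : a ≤ x := by nlinarith
      have hxb : x ≤ b := by nlinarith
      have hx0 : (0:ℝ) ≤ x := ha.trans hax
      have e1 := hGeq a x ha hax
      have e2 := hGeq x b hx0 hxb
      have b1 : (x - a) * h x ≤ ∫ t in a..x, h t := (hbound ha hax).1
      have b2 : (∫ t in x..b, h t) ≤ (b - x) * h x := (hbound hx0 hxb).2
      have hxa : x - a = (1-s)*(b-a) := by rw [hxdef]; ring
      have hbx : b - x = s*(b-a) := by rw [hxdef]; ring
      rw [hxa] at b1
      rw [hbx] at b2
      have m1 := mul_le_mul_of_nonneg_left b2 (show (0:ℝ) ≤ 1 - s by linarith)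
      have m2 := mul_le_mul_of_nonneg_left b1 hs
      have n1 := congrArg (fun z => s * z) e1
      have n2 := congrArg (fun z => (1-s) * z) e2
      nlinarith [m1, m2, n1, n2]
    intro a ha b hb s hs
    have hx : s*a + (1-s)*b ∈ Ici (0:ℝ) := by
      simp only [mem_Ici] at ha hb ⊢
      nlinarith [hs.1, hs.2]
    rw [hgG a ha, hgG b hb, hgG _ hx, ← EReal.coe_mul, ← EReal.coe_mul, ← EReal.coe_add,
      EReal.coe_le_coe_iff]
    rcases le_total a b with hab | hba
    · exact hconc a b s ha hab hs.1 hs.2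
    · have := hconc b a (1-s) hb hba (by linarith [hs.2]) (by linarith [hs.1])
      rw [show (1:ℝ)-(1-s) = s by ring] at this
      rw [show s*a + (1-s)*b = (1-s)*b + s*a by ring]
      linarith
  -- (5) right derivative
  · intro t ht _
    have hmap : Tendsto (fun ε : ℝ => t + ε) (𝓝[>] (0:ℝ)) (𝓝[Ici t] t) := by
      rw [tendsto_nhdsWithin_iff]
      constructor
      · have h1 : Tendsto (fun ε : ℝ => t + ε) (𝓝 0) (𝓝 t) := by
          have hcont : Continuous fun ε : ℝ => t + ε := continuous_const.add continuous_id
          simpa using hcont.tendsto 0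
        exact h1.mono_left nhdsWithin_le_nhds
      · filter_upwards [self_mem_nhdsWithin] with ε hε
        exact le_add_of_nonneg_right (le_of_lt (show (0:ℝ) < ε from hε))
    have htt : Tendsto (fun ε : ℝ => h (t + ε)) (𝓝[>] (0:ℝ)) (𝓝 (h t)) :=
      (hrc t ht).tendsto.comp hmap
    have key : Tendsto (fun ε : ℝ => (G (t+ε) - G t) * (1/ε)) (𝓝[>] (0:ℝ)) (𝓝 (h t / 2)) := by
      refine tendsto_of_tendsto_of_tendsto_of_le_of_le' (g := fun ε => h (t+ε) / 2)
        (h := fun _ => h t / 2) (htt.div_const 2) tendsto_const_nhds ?_ ?_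
      · filter_upwards [self_mem_nhdsWithin] with ε hε
        have hε0 : (0:ℝ) < ε := hε
        have e := hGeq t (t+ε) ht (by linarith)
        have b1 := (hbound ht (show t ≤ t + ε by linarith)).1
        rw [show t + ε - t = ε by ring] at b1
        have : (G (t+ε) - G t) * (1/ε) = (∫ u in t..(t+ε), h u) / (2*ε) := by
          rw [e]; ring
        rw [this, div_le_div_iff₀ (by norm_num) (by linarith)]
        nlinarith [b1]
      · filter_upwards [self_mem_nhdsWithin] with ε hε
        have hε0 : (0:ℝ) < ε := hε
        have e := hGeq t (t+ε) ht (by linarith)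
        have b2 := (hbound ht (show t ≤ t + ε by linarith)).2
        rw [show t + ε - t = ε by ring] at b2
        have : (G (t+ε) - G t) * (1/ε) = (∫ u in t..(t+ε), h u) / (2*ε) := by
          rw [e]; ring
        rw [this, div_le_div_iff₀ (by linarith) (by norm_num)]
        nlinarith [b2]
    have := EReal.tendsto_coe.2 key
    refine this.congr' ?_
    filter_upwards [self_mem_nhdsWithin] with ε hε
    rw [hgG (t+ε) (by simp only [mem_Ici] at ht ⊢; linarith [show (0:ℝ) < ε from hε]),
      hgG t ht, ← EReal.coe_sub, ← EReal.coe_mul]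
  -- (6) lower bound
  · intro t₀ ht₀pos
    have ht₀ : (0:ℝ) ≤ t₀ := ht₀pos.le
    rw [hgG t₀ ht₀, EReal.coe_le_coe_iff]
    obtain ⟨φint, φval⟩ := st10.logint hN ht₀pos
    have wint := st10.w_int hC hN hmono hnn hlow hup ht₀
    have hmono' : (∫ t in Ioi (0:ℝ), ((n+m:ℝ)/(1+t) - (n+m:ℝ)/(t+t₀)))
        ≤ ∫ t in Ioi (0:ℝ), ((n+m:ℝ)/(1+t) - h (t + t₀)) := by
      refine setIntegral_mono_on φint wint measurableSet_Ioi ?_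
      intro t htp
      have htp0 : (0:ℝ) < t := htp
      have : h (t + t₀) ≤ (n+m:ℝ)/(t+t₀) := hup (t+t₀) (by linarith)
      linarith
    have hlogmul : Real.log (2 * π * Real.exp 1 * t₀)
        = Real.log (2 * π * Real.exp 1) + Real.log t₀ :=
      Real.log_mul (by positivity) ht₀pos.ne'
    simp only [hG, hc]
    rw [hlogmul]
    rw [φval] at hmono'
    linarith [hmono']
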